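/- If u : ℝ² → ℂ is a Schwartz function and φ(x,y) = (x / cosh(y/2), sinh(y)), then the composition u ∘ φ is again a Schwartz function on ℝ². -/

import Mathlib

open scoped ContDiff Nat

noncomputable section

namespace Stmt2Aux

lemma natle (n : ℕ) : (n : WithTop ℕ∞) ≤ ∞ := by exact_mod_cast le_top

/-! ### The logistic-type function `qf` -/

def qf : ℝ → ℝ := fun y => (Real.exp y + 1)⁻¹

lemma qf_pos (y : ℝ) : 0 < qf y := by
  have := Real.exp_pos y
  unfold qf; positivity

lemma qf_le_one (y : ℝ) : qf y ≤ 1 := by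
  have h : (1:ℝ) ≤ Real.exp y + 1 := by have := Real.exp_pos y; linarith
  simpa [qf] using inv_le_one_of_one_le₀ h

lemma qf_contDiff : ContDiff ℝ ∞ qf :=
  (Real.contDiff_exp.add contDiff_const).inv fun y => by have := Real.exp_pos y; positivity

lemma qf_hasDerivAt (y : ℝ) : HasDerivAt qf (qf y ^ 2 - qf y) y := by
  have hne : Real.exp y + 1 ≠ 0 := by have := Real.exp_pos y; positivity
  have h : HasDerivAt (fun y => Real.exp y + 1) (Real.exp y) y :=
    (Real.hasDerivAt_exp y).add_const 1
  have h2 : HasDerivAt qf (-Real.exp y / (Real.exp y + 1) ^ 2) y := h.inv hne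
  convert h2 using 1
  have := Real.exp_pos y
  unfold qf
  field_simp
  ring

lemma qf_iteratedDeriv (n : ℕ) :
    ∃ r : Polynomial ℝ, iteratedDeriv n qf = fun y => qf y * r.eval (qf y) := by
  induction n with
  | zero =>
    refine ⟨1, ?_⟩
    funext y
    simp [iteratedDeriv_zero]
  | succ n ih =>
    obtain ⟨r, hr⟩ := ih
    refine ⟨(Polynomial.X - 1) * (r + Polynomial.X * Polynomial.derivative r), ?_⟩
    funext y
    rw [iteratedDeriv_succ, hr]
    have h : HasDerivAt (fun y => qf y * r.eval (qf y))
        (qf y * (((Polynomial.X - 1) * (r + Polynomial.X * Polynomial.derivative r)).eval (qf y))) y := by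
      have hq := qf_hasDerivAt y
      have hp : HasDerivAt (fun y => r.eval (qf y))
          ((Polynomial.derivative r).eval (qf y) * (qf y ^ 2 - qf y)) y :=
        (r.hasDerivAt (qf y)).comp y hq
      have hm : HasDerivAt (fun y => qf y * r.eval (qf y)) _ y := hq.mul hp
      convert hm using 1
      simp only [Polynomial.eval_mul, Polynomial.eval_add, Polynomial.eval_sub,
        Polynomial.eval_one, Polynomial.eval_X]
      ring
    exact h.deriv

lemma eval_abs_le (r : Polynomial ℝ) {t : ℝ} (h0 : 0 ≤ t) (h1 : t ≤ 1) :
    |r.eval t| ≤ ∑ i ∈ Finset.range (r.natDegree + 1), |r.coeff i| := by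
  rw [Polynomial.eval_eq_sum_range]
  refine (Finset.abs_sum_le_sum_abs _ _).trans ?_
  refine Finset.sum_le_sum fun i _ => ?_
  rw [abs_mul]
  have ht : |t ^ i| ≤ 1 := by
    rw [abs_pow, abs_of_nonneg h0]
    exact pow_le_one₀ h0 h1
  calc |r.coeff i| * |t ^ i| ≤ |r.coeff i| * 1 :=
        mul_le_mul_of_nonneg_left ht (abs_nonneg _)
    _ = |r.coeff i| := mul_one _

lemma qf_bound (n : ℕ) : ∃ C, 0 ≤ C ∧ ∀ y, |iteratedDeriv n qf y| ≤ C * qf y := by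
  obtain ⟨r, hr⟩ := qf_iteratedDeriv n
  refine ⟨∑ i ∈ Finset.range (r.natDegree + 1), |r.coeff i|,
    Finset.sum_nonneg fun _ _ => abs_nonneg _, fun y => ?_⟩
  rw [hr]
  have h := eval_abs_le r (qf_pos y).le (qf_le_one y)
  calc |qf y * r.eval (qf y)| = qf y * |r.eval (qf y)| := by
        rw [abs_mul, abs_of_pos (qf_pos y)]
    _ ≤ qf y * (∑ i ∈ Finset.range (r.natDegree + 1), |r.coeff i|) :=
        mul_le_mul_of_nonneg_left h (qf_pos y).le
    _ = _ := mul_comm _ _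

lemma qf_bound' (n : ℕ) : ∃ C, 0 ≤ C ∧ ∀ m ≤ n, ∀ y, |iteratedDeriv m qf y| ≤ C * qf y := by
  induction n with
  | zero =>
    obtain ⟨C, hC0, hC⟩ := qf_bound 0
    exact ⟨C, hC0, fun m hm y => by rw [Nat.le_zero.mp hm]; exact hC y⟩
  | succ n ih =>
    obtain ⟨C, hC0, hC⟩ := ih
    obtain ⟨C', hC'0, hC'⟩ := qf_bound (n + 1)
    refine ⟨max C C', le_trans hC0 (le_max_left _ _), fun m hm y => ?_⟩
    rcases Nat.lt_succ_iff_lt_or_eq.mp (Nat.lt_succ_of_le hm) with h | h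
    · exact (hC m (Nat.lt_succ_iff.mp h) y).trans
        (mul_le_mul_of_nonneg_right (le_max_left _ _) (qf_pos y).le)
    · rw [h]
      exact (hC' y).trans (mul_le_mul_of_nonneg_right (le_max_right _ _) (qf_pos y).le)

/-! ### `ef2 y = 2 exp(y/2)` -/

def ef2 : ℝ → ℝ := fun y => 2 * Real.exp (y / 2)

lemma ef2_pos (y : ℝ) : 0 < ef2 y := by have := Real.exp_pos (y/2); unfold ef2; positivity

lemma ef2_contDiff : ContDiff ℝ ∞ ef2 :=
  contDiff_const.mul (Real.contDiff_exp.comp (contDiff_id.div_const 2))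

lemma ef2_hasDerivAt (y : ℝ) : HasDerivAt ef2 (ef2 y * (1/2)) y := by
  have h := ((Real.hasDerivAt_exp (y/2)).comp y ((hasDerivAt_id y).div_const 2)).const_mul (2:ℝ)
  have : 2 * (Real.exp (y/2) * (1/2)) = ef2 y * (1/2) := by unfold ef2; ring
  rw [this] at h
  exact h

lemma ef2_iteratedDeriv (n : ℕ) : iteratedDeriv n ef2 = fun y => (1/2:ℝ)^n * ef2 y := by
  induction n with
  | zero => funext y; simp [iteratedDeriv_zero]
  | succ n ih =>
    rw [iteratedDeriv_succ, ih]
    funext y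
    have h : HasDerivAt (fun y => (1/2:ℝ)^n * ef2 y) ((1/2:ℝ)^n * (ef2 y * (1/2))) y :=
      (ef2_hasDerivAt y).const_mul _
    rw [h.deriv]
    ring

lemma ef2_mul_qf_le_two (y : ℝ) : ef2 y * qf y ≤ 2 := by
  have h : Real.exp (y/2) ≤ Real.exp y + 1 := by
    rcases le_or_gt y 0 with h | h
    · have h1 : Real.exp (y/2) ≤ 1 := Real.exp_le_one_iff.mpr (by linarith)
      have := Real.exp_pos y
      linarith
    · have h1 : Real.exp (y/2) ≤ Real.exp y := Real.exp_le_exp.mpr (by linarith)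
      linarith
  have hpos : (0:ℝ) < Real.exp y + 1 := by have := Real.exp_pos y; positivity
  have : Real.exp (y/2) * qf y ≤ 1 := by
    rw [qf, ← div_eq_mul_inv]
    exact (div_le_one hpos).mpr h
  calc ef2 y * qf y = 2 * (Real.exp (y/2) * qf y) := by unfold ef2; ring
    _ ≤ 2 * 1 := by linarith
    _ = 2 := by norm_num

/-! ### `sch y = sech(y/2)` -/

def sch : ℝ → ℝ := fun y => (Real.cosh (y / 2))⁻¹

lemma sf_contDiff : ContDiff ℝ ∞ sch :=
  (Real.contDiff_cosh.comp (contDiff_id.div_const 2)).inv fun y => (Real.cosh_pos _).ne'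

lemma sf_eq : sch = fun y => ef2 y * qf y := by
  funext y
  have h1 : Real.exp (y/2) * Real.exp (y/2) = Real.exp y := by
    rw [← Real.exp_add]; ring_nf
  have h2 : Real.exp (y/2) * Real.exp (-(y/2)) = 1 := by
    rw [← Real.exp_add]; simp
  have he1 := Real.exp_pos (y/2)
  have he2 := Real.exp_pos (-(y/2))
  have he3 := Real.exp_pos y
  unfold sch ef2 qf
  rw [Real.cosh_eq]
  have hne1 : Real.exp (y/2) + Real.exp (-(y/2)) ≠ 0 := by positivity
  have hne2 : Real.exp y + 1 ≠ 0 := by positivity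
  field_simp
  have h3 : Real.exp (-y/2) = Real.exp (-(y/2)) := by norm_num [neg_div]
  linear_combination -h1 - h2

lemma sf_pos (y : ℝ) : 0 < sch y := inv_pos.mpr (Real.cosh_pos _)

lemma sf_mul_cosh (y : ℝ) : sch y * Real.cosh (y/2) = 1 :=
  inv_mul_cancel₀ (Real.cosh_pos _).ne'

lemma sf_bound (n : ℕ) : ∃ C, 0 ≤ C ∧ ∀ y, ‖iteratedFDeriv ℝ n sch y‖ ≤ C := by
  obtain ⟨C, hC0, hC⟩ := qf_bound' n
  refine ⟨2^n * (2 * C), by positivity, fun y => ?_⟩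
  have hsmul : sch = fun y => ef2 y • qf y := by rw [sf_eq]; rfl
  rw [hsmul]
  have h := norm_iteratedFDeriv_smul_le (𝕜 := ℝ) ef2_contDiff qf_contDiff y (natle n)
  refine h.trans ?_
  have hterm : ∀ i ∈ Finset.range (n + 1),
      (n.choose i : ℝ) * ‖iteratedFDeriv ℝ i ef2 y‖ * ‖iteratedFDeriv ℝ (n - i) qf y‖ ≤
      (n.choose i : ℝ) * (2 * C) := by
    intro i hi
    have h1 : ‖iteratedFDeriv ℝ i ef2 y‖ = (1/2:ℝ)^i * ef2 y := by
      rw [norm_iteratedFDeriv_eq_norm_iteratedDeriv, ef2_iteratedDeriv, Real.norm_eq_abs]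
      rw [abs_of_pos (by have := ef2_pos y; positivity)]
    have h2 : ‖iteratedFDeriv ℝ (n - i) qf y‖ ≤ C * qf y := by
      rw [norm_iteratedFDeriv_eq_norm_iteratedDeriv, Real.norm_eq_abs]
      exact hC (n - i) (Nat.sub_le _ _) y
    have hef := ef2_pos y
    have hqf := qf_pos y
    have hhalf : ((1:ℝ)/2)^i ≤ 1 := pow_le_one₀ (by norm_num) (by norm_num)
    have key : ‖iteratedFDeriv ℝ i ef2 y‖ * ‖iteratedFDeriv ℝ (n - i) qf y‖ ≤ 2 * C := by
      rw [h1]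
      calc (1/2:ℝ)^i * ef2 y * ‖iteratedFDeriv ℝ (n-i) qf y‖
          ≤ 1 * ef2 y * (C * qf y) := by
            apply mul_le_mul (mul_le_mul_of_nonneg_right hhalf hef.le) h2 (norm_nonneg _)
            positivity
        _ = C * (ef2 y * qf y) := by ring
        _ ≤ C * 2 := mul_le_mul_of_nonneg_left (ef2_mul_qf_le_two y) hC0
        _ = 2 * C := mul_comm _ _
    rw [mul_assoc]
    exact mul_le_mul_of_nonneg_left key (by positivity)
  refine (Finset.sum_le_sum hterm).trans ?_
  rw [← Finset.sum_mul]
  have : (∑ i ∈ Finset.range (n + 1), (n.choose i : ℝ)) = 2^n := by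
    rw [← Nat.cast_sum]
    rw [Nat.sum_range_choose]
    push_cast
    ring
  rw [this]

lemma sf_bound' (n : ℕ) : ∃ C, 0 ≤ C ∧ ∀ m ≤ n, ∀ y, ‖iteratedFDeriv ℝ m sch y‖ ≤ C := by
  induction n with
  | zero =>
    obtain ⟨C, hC0, hC⟩ := sf_bound 0
    exact ⟨C, hC0, fun m hm y => by rw [Nat.le_zero.mp hm]; exact hC y⟩
  | succ n ih =>
    obtain ⟨C, hC0, hC⟩ := ih
    obtain ⟨C', hC'0, hC'⟩ := sf_bound (n + 1)
    refine ⟨max C C', le_trans hC0 (le_max_left _ _), fun m hm y => ?_⟩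
    rcases Nat.lt_succ_iff_lt_or_eq.mp (Nat.lt_succ_of_le hm) with h | h
    · exact (hC m (Nat.lt_succ_iff.mp h) y).trans (le_max_left _ _)
    · rw [h]; exact (hC' y).trans (le_max_right _ _)

/-! ### sinh bounds -/

lemma sinh_iter (n : ℕ) :
    iteratedDeriv n Real.sinh = Real.sinh ∨ iteratedDeriv n Real.sinh = Real.cosh := by
  induction n with
  | zero => left; funext y; simp [iteratedDeriv_zero]
  | succ n ih =>
    rw [iteratedDeriv_succ]
    rcases ih with h | h <;> rw [h]
    · right; exact Real.deriv_sinh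
    · left; exact Real.deriv_cosh

lemma abs_sinh_le_cosh (y : ℝ) : |Real.sinh y| ≤ Real.cosh y := by
  rw [Real.abs_sinh, ← Real.cosh_abs]
  exact (Real.sinh_lt_cosh _).le

lemma sinh_deriv_bound (n : ℕ) (y : ℝ) :
    ‖iteratedFDeriv ℝ n Real.sinh y‖ ≤ Real.cosh y := by
  rw [norm_iteratedFDeriv_eq_norm_iteratedDeriv, Real.norm_eq_abs]
  rcases sinh_iter n with h | h <;> rw [h]
  · exact abs_sinh_le_cosh y
  · rw [abs_of_pos (Real.cosh_pos y)]

end Stmt2Aux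

namespace Stmt2Aux

/-! ### Bounds on `ℝ²` -/

lemma fst_iFD_bound (j : ℕ) (p : ℝ × ℝ) :
    ‖iteratedFDeriv ℝ j (fun q : ℝ × ℝ => q.1) p‖ ≤ 1 + |p.1| := by
  have h0 := abs_nonneg p.1
  match j with
  | 0 =>
    rw [norm_iteratedFDeriv_zero]
    have : ‖(fun q : ℝ × ℝ => q.1) p‖ = |p.1| := rfl
    rw [this]; linarith
  | 1 =>
    have h : ‖iteratedFDeriv ℝ 1 (fun q : ℝ × ℝ => q.1) p‖ ≤ 1 := by
      refine ContinuousMultilinearMap.opNorm_le_bound zero_le_one fun m => ?_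
      rw [iteratedFDeriv_one_apply]
      have hf : fderiv ℝ (fun q : ℝ × ℝ => q.1) p = ContinuousLinearMap.fst ℝ ℝ ℝ := fderiv_fst
      rw [hf]
      have : ‖(ContinuousLinearMap.fst ℝ ℝ ℝ) (m 0)‖ ≤ ‖m 0‖ := norm_fst_le (m 0)
      calc ‖(ContinuousLinearMap.fst ℝ ℝ ℝ) (m 0)‖ ≤ ‖m 0‖ := this
        _ = 1 * ∏ i, ‖m i‖ := by rw [Fin.prod_univ_one, one_mul]
    linarith
  | (j+2) =>
    have hz : ‖iteratedFDeriv ℝ (j+2) (fun q : ℝ × ℝ => q.1) p‖ = 0 := by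
      rw [← norm_iteratedFDeriv_fderiv]
      have hf : (fderiv ℝ (fun q : ℝ × ℝ => q.1)) =
          fun _ : ℝ × ℝ => ContinuousLinearMap.fst ℝ ℝ ℝ := by
        funext q; exact fderiv_fst
      rw [hf, iteratedFDeriv_const_of_ne (Nat.succ_ne_zero j)]
      simp
    rw [hz]; linarith

lemma comp_snd_bound {f : ℝ → ℝ} (hf : ContDiff ℝ ∞ f) (i : ℕ) (p : ℝ × ℝ) :
    ‖iteratedFDeriv ℝ i (fun q : ℝ × ℝ => f q.2) p‖ ≤ ‖iteratedFDeriv ℝ i f p.2‖ := by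
  have heq : (fun q : ℝ × ℝ => f q.2) = f ∘ (ContinuousLinearMap.snd ℝ ℝ ℝ) := rfl
  rw [heq, ContinuousLinearMap.iteratedFDeriv_comp_right _ hf p (natle i)]
  refine (ContinuousMultilinearMap.norm_compContinuousLinearMap_le _ _).trans ?_
  simp [ContinuousLinearMap.norm_snd]

def f1 : ℝ × ℝ → ℝ := fun p => p.1 * sch p.2
def f2 : ℝ × ℝ → ℝ := fun p => Real.sinh p.2

lemma f1_contDiff : ContDiff ℝ ∞ f1 := contDiff_fst.mul (sf_contDiff.comp contDiff_snd)
lemma f2_contDiff : ContDiff ℝ ∞ f2 := Real.contDiff_sinh.comp contDiff_snd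

lemma f2_bound (i : ℕ) (p : ℝ × ℝ) : ‖iteratedFDeriv ℝ i f2 p‖ ≤ Real.cosh p.2 :=
  (comp_snd_bound Real.contDiff_sinh i p).trans (sinh_deriv_bound i p.2)

lemma f1_bound (n : ℕ) : ∃ C, 0 ≤ C ∧ ∀ p : ℝ × ℝ, ∀ i ≤ n,
    ‖iteratedFDeriv ℝ i f1 p‖ ≤ C * (1 + |p.1|) := by
  obtain ⟨C, hC0, hC⟩ := sf_bound' n
  refine ⟨2^n * C, by positivity, fun p i hi => ?_⟩
  have hsmul : f1 = fun p : ℝ × ℝ => p.1 • sch p.2 := rfl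
  rw [hsmul]
  have h := norm_iteratedFDeriv_smul_le (𝕜 := ℝ)
    (contDiff_fst (𝕜 := ℝ) (E := ℝ) (F := ℝ))
    (sf_contDiff.comp contDiff_snd) p (natle i)
  refine h.trans ?_
  have hterm : ∀ j ∈ Finset.range (i + 1),
      (i.choose j : ℝ) * ‖iteratedFDeriv ℝ j (fun q : ℝ × ℝ => q.1) p‖ *
        ‖iteratedFDeriv ℝ (i - j) (fun q : ℝ × ℝ => sch q.2) p‖ ≤
      (i.choose j : ℝ) * ((1 + |p.1|) * C) := by
    intro j _
    have h1 := fst_iFD_bound j p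
    have h2 : ‖iteratedFDeriv ℝ (i - j) (fun q : ℝ × ℝ => sch q.2) p‖ ≤ C :=
      (comp_snd_bound sf_contDiff (i - j) p).trans
        (hC (i - j) (le_trans (Nat.sub_le _ _) hi) p.2)
    have h0 := abs_nonneg p.1
    rw [mul_assoc]
    refine mul_le_mul_of_nonneg_left ?_ (by positivity)
    exact mul_le_mul h1 h2 (norm_nonneg _) (by positivity)
  refine (Finset.sum_le_sum hterm).trans ?_
  rw [← Finset.sum_mul]
  have hsum : (∑ j ∈ Finset.range (i + 1), (i.choose j : ℝ)) = 2^i := by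
    rw [← Nat.cast_sum, Nat.sum_range_choose]
    push_cast; ring
  rw [hsum]
  have h2i : (2:ℝ)^i ≤ 2^n := by
    apply pow_le_pow_right₀ (by norm_num) hi
  have h0 := abs_nonneg p.1
  calc (2:ℝ)^i * ((1 + |p.1|) * C) ≤ 2^n * ((1 + |p.1|) * C) := by
        apply mul_le_mul_of_nonneg_right h2i (by positivity)
    _ = 2^n * C * (1 + |p.1|) := by ring

def phi : ℝ × ℝ → ℝ × ℝ := fun p => (p.1 * sch p.2, Real.sinh p.2)

lemma phi_contDiff : ContDiff ℝ ∞ phi :=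
  (contDiff_fst.mul (sf_contDiff.comp contDiff_snd)).prodMk
    (Real.contDiff_sinh.comp contDiff_snd)

lemma norm_inl_le : ‖ContinuousLinearMap.inl ℝ ℝ ℝ‖ ≤ 1 :=
  ContinuousLinearMap.opNorm_le_bound _ zero_le_one fun x => by
    rw [ContinuousLinearMap.inl_apply, one_mul, Prod.norm_def]
    simp [norm_nonneg]

lemma norm_inr_le : ‖ContinuousLinearMap.inr ℝ ℝ ℝ‖ ≤ 1 :=
  ContinuousLinearMap.opNorm_le_bound _ zero_le_one fun x => by
    rw [ContinuousLinearMap.inr_apply, one_mul, Prod.norm_def]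
    simp [norm_nonneg]

lemma phi_bound (n : ℕ) : ∃ A, 1 ≤ A ∧ ∀ p : ℝ × ℝ, ∀ i ≤ n,
    ‖iteratedFDeriv ℝ i phi p‖ ≤ A * ((1 + |p.1|) * Real.cosh p.2) := by
  obtain ⟨C, hC0, hC⟩ := f1_bound n
  refine ⟨C + 1, by linarith, fun p i hi => ?_⟩
  have hsplit : phi = (fun p => ContinuousLinearMap.inl ℝ ℝ ℝ (f1 p)) +
      (fun p => ContinuousLinearMap.inr ℝ ℝ ℝ (f2 p)) := by
    funext p
    simp only [phi, f1, f2, Pi.add_apply, ContinuousLinearMap.inl_apply,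
      ContinuousLinearMap.inr_apply, Prod.mk_add_mk, add_zero, zero_add]
  rw [hsplit]
  have h1c : ContDiff ℝ (i : ℕ∞) (fun p => ContinuousLinearMap.inl ℝ ℝ ℝ (f1 p)) :=
    (((ContinuousLinearMap.inl ℝ ℝ ℝ).contDiff).comp f1_contDiff).of_le (natle i)
  have h2c : ContDiff ℝ (i : ℕ∞) (fun p => ContinuousLinearMap.inr ℝ ℝ ℝ (f2 p)) :=
    (((ContinuousLinearMap.inr ℝ ℝ ℝ).contDiff).comp f2_contDiff).of_le (natle i)
  rw [iteratedFDeriv_add_apply h1c.contDiffAt h2c.contDiffAt]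
  refine (norm_add_le _ _).trans ?_
  have e1 : iteratedFDeriv ℝ i (fun p => ContinuousLinearMap.inl ℝ ℝ ℝ (f1 p)) p =
      (ContinuousLinearMap.inl ℝ ℝ ℝ).compContinuousMultilinearMap (iteratedFDeriv ℝ i f1 p) :=
    ContinuousLinearMap.iteratedFDeriv_comp_left _ (f1_contDiff.contDiffAt (x := p)) (natle i)
  have e2 : iteratedFDeriv ℝ i (fun p => ContinuousLinearMap.inr ℝ ℝ ℝ (f2 p)) p =
      (ContinuousLinearMap.inr ℝ ℝ ℝ).compContinuousMultilinearMap (iteratedFDeriv ℝ i f2 p) :=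
    ContinuousLinearMap.iteratedFDeriv_comp_left _ (f2_contDiff.contDiffAt (x := p)) (natle i)
  rw [e1, e2]
  have b1 : ‖(ContinuousLinearMap.inl ℝ ℝ ℝ).compContinuousMultilinearMap
      (iteratedFDeriv ℝ i f1 p)‖ ≤ C * (1 + |p.1|) := by
    refine (ContinuousLinearMap.norm_compContinuousMultilinearMap_le _ _).trans ?_
    calc ‖ContinuousLinearMap.inl ℝ ℝ ℝ‖ * ‖iteratedFDeriv ℝ i f1 p‖
        ≤ 1 * (C * (1 + |p.1|)) := by
          apply mul_le_mul norm_inl_le (hC p i hi) (norm_nonneg _) zero_le_one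
      _ = C * (1 + |p.1|) := one_mul _
  have b2 : ‖(ContinuousLinearMap.inr ℝ ℝ ℝ).compContinuousMultilinearMap
      (iteratedFDeriv ℝ i f2 p)‖ ≤ Real.cosh p.2 := by
    refine (ContinuousLinearMap.norm_compContinuousMultilinearMap_le _ _).trans ?_
    calc ‖ContinuousLinearMap.inr ℝ ℝ ℝ‖ * ‖iteratedFDeriv ℝ i f2 p‖
        ≤ 1 * Real.cosh p.2 := by
          apply mul_le_mul norm_inr_le (f2_bound i p) (norm_nonneg _) zero_le_one
      _ = Real.cosh p.2 := one_mul _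
  have hcosh := Real.one_le_cosh p.2
  have h0 := abs_nonneg p.1
  have hX : (0:ℝ) ≤ 1 + |p.1| := by linarith
  have k1 : C * (1 + |p.1|) ≤ C * (1 + |p.1|) * Real.cosh p.2 := by
    have := mul_le_mul_of_nonneg_left hcosh (mul_nonneg hC0 hX)
    linarith
  have k2 : Real.cosh p.2 ≤ (1 + |p.1|) * Real.cosh p.2 := by
    have := mul_le_mul_of_nonneg_right (by linarith : (1:ℝ) ≤ 1 + |p.1|) (Real.cosh_pos p.2).le
    linarith
  have target : (C + 1) * ((1 + |p.1|) * Real.cosh p.2) =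
      C * (1 + |p.1|) * Real.cosh p.2 + (1 + |p.1|) * Real.cosh p.2 := by ring
  rw [target]
  linarith [b1, b2, k1, k2]

end Stmt2Aux

open Stmt2Aux

/-- If u is a Schwartz function on ℝ² and φ(x,y) = (x/cosh(y/2), sinh y),
then u ∘ φ is again a Schwartz function on ℝ². -/
theorem stmt2 (u : SchwartzMap (ℝ × ℝ) ℂ) :
    ∃ v : SchwartzMap (ℝ × ℝ) ℂ,
      ∀ p : ℝ × ℝ, v p = u (p.1 / Real.cosh (p.2 / 2), Real.sinh p.2) := by
  refine ⟨⟨fun p => u (phi p), u.smooth'.comp phi_contDiff, ?_⟩, ?_⟩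
  · intro k n
    obtain ⟨A, hA1, hA⟩ := phi_bound n
    have h0A : (0:ℝ) ≤ A := by linarith
    set k' : ℕ := 3*k + 3*n with hk'
    set S : ℝ := 2^k' * ((Finset.Iic ((k' : ℕ), n)).sup
      (fun m => SchwartzMap.seminorm ℝ m.1 m.2)) u with hSdef
    have hS0 : 0 ≤ S := by
      apply mul_nonneg (by positivity)
      exact apply_nonneg _ _
    refine ⟨(n ! : ℝ) * S * (A^n * 2^(k+n)), fun p => ?_⟩
    set Φ : ℝ := 1 + ‖phi p‖ with hΦdef
    have hφ0 := norm_nonneg (phi p)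
    have hΦ1 : 1 ≤ Φ := by rw [hΦdef]; linarith
    have hΦ0 : 0 ≤ Φ := by linarith
    have hΦpos : (0:ℝ) < Φ ^ k' := pow_pos (by linarith) k'
    have hC : ∀ i, i ≤ n → ‖iteratedFDeriv ℝ i (⇑u) (phi p)‖ ≤ S / Φ^k' := by
      intro i hi
      rw [le_div_iff₀ hΦpos, mul_comm]
      exact SchwartzMap.one_add_le_sup_seminorm_apply (𝕜 := ℝ) (m := (k', n)) le_rfl hi u (phi p)
    set c : ℝ := Real.cosh p.2 with hcdef
    set X : ℝ := 1 + |p.1| with hXdef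
    have hc1 : 1 ≤ c := Real.one_le_cosh p.2
    have h0c : (0:ℝ) ≤ c := by linarith
    have hX1 : 1 ≤ X := by rw [hXdef]; have := abs_nonneg p.1; linarith
    have h0X : (0:ℝ) ≤ X := by linarith
    set D : ℝ := A * (X * c) with hDdef
    have hD1 : 1 ≤ D := by
      rw [hDdef]
      calc (1:ℝ) = 1 * (1 * 1) := by norm_num
        _ ≤ A * (X * c) := by
          apply mul_le_mul hA1 (mul_le_mul hX1 hc1 zero_le_one h0X) (by norm_num) h0A
    have h0D : (0:ℝ) ≤ D := by linarith
    have hDbound : ∀ i, 1 ≤ i → i ≤ n → ‖iteratedFDeriv ℝ i phi p‖ ≤ D ^ i := by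
      intro i h1i hin
      exact (hA p i hin).trans (le_self_pow₀ hD1 (by omega))
    have hcomp := norm_iteratedFDeriv_comp_le u.smooth' phi_contDiff (natle n) p hC hDbound
    have e4 : |Real.sinh p.2| ≤ ‖phi p‖ := by
      have h5 : |Real.sinh p.2| = ‖(phi p).2‖ := rfl
      rw [h5]; exact norm_snd_le (phi p)
    have h1 : c ≤ Φ := by
      have e2 := Real.cosh_sub_sinh (|p.2|)
      have e3 : Real.exp (-|p.2|) ≤ 1 := Real.exp_le_one_iff.mpr (by simp [abs_nonneg])
      have e5 : Real.sinh |p.2| = |Real.sinh p.2| := (Real.abs_sinh p.2).symm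
      have e6 : Real.cosh |p.2| = c := by rw [hcdef, Real.cosh_abs]
      rw [hΦdef]
      linarith
    have hx2 : |p.1| ≤ ‖phi p‖ * c := by
      have hp1 : |(phi p).1| = |p.1| * sch p.2 := by
        show |p.1 * sch p.2| = |p.1| * sch p.2
        rw [abs_mul, abs_of_pos (sf_pos p.2)]
      have h6 : |p.1| = |(phi p).1| * Real.cosh (p.2/2) := by
        rw [hp1, mul_assoc, sf_mul_cosh, mul_one]
      have h7 : |(phi p).1| ≤ ‖phi p‖ := norm_fst_le (phi p)
      have h8 : Real.cosh (p.2/2) ≤ c := by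
        rw [hcdef]
        apply Real.cosh_le_cosh.mpr
        rw [abs_div]
        have := abs_nonneg p.2
        rw [abs_two]
        linarith
      calc |p.1| = |(phi p).1| * Real.cosh (p.2/2) := h6
        _ ≤ ‖phi p‖ * c := mul_le_mul h7 h8 (Real.cosh_pos _).le (norm_nonneg _)
    have h2 : X ≤ 2 * Φ^2 := by
      have hm := mul_le_mul_of_nonneg_left h1 hφ0
      rw [hXdef, hΦdef]
      nlinarith [hx2, hφ0]
    have hy : |p.2| ≤ ‖phi p‖ := by
      have hs : |p.2| ≤ |Real.sinh p.2| := by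
        rw [Real.abs_sinh]
        exact Real.self_le_sinh_iff.mpr (abs_nonneg p.2)
      exact hs.trans e4
    have h3 : 1 + ‖p‖ ≤ 2 * Φ^3 := by
      have hp : ‖p‖ ≤ |p.1| + |p.2| := by
        rw [Prod.norm_def]
        apply max_le
        · have := abs_nonneg p.2; simp only [Real.norm_eq_abs]; linarith
        · have := abs_nonneg p.1; simp only [Real.norm_eq_abs]; linarith
      have hfac : 0 ≤ (Φ - 1) * (2*Φ^2 - 1) := by nlinarith [hΦ1]
      have hyΦ : |p.2| ≤ Φ - 1 := by rw [hΦdef]; linarith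
      nlinarith [h2, hX1, hΦ1]
    have key : (1 + ‖p‖)^k * D^n ≤ A^n * 2^(k+n) * Φ^k' := by
      have h0p : (0:ℝ) ≤ 1 + ‖p‖ := by have := norm_nonneg p; linarith
      have h0Xc : (0:ℝ) ≤ X * c := mul_nonneg h0X h0c
      have hXcΦ : X * c ≤ (2*Φ^2) * Φ := mul_le_mul h2 h1 h0c (by positivity)
      have e : D^n = A^n * (X*c)^n := by rw [hDdef, mul_pow]
      calc (1 + ‖p‖)^k * D^n = A^n * ((1 + ‖p‖)^k * (X*c)^n) := by rw [e]; ring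
        _ ≤ A^n * ((2*Φ^3)^k * ((2*Φ^2)*Φ)^n) := by
            apply mul_le_mul_of_nonneg_left ?_ (pow_nonneg h0A n)
            apply mul_le_mul (pow_le_pow_left₀ h0p h3 k) (pow_le_pow_left₀ h0Xc hXcΦ n)
              (pow_nonneg h0Xc n) (pow_nonneg (by positivity) k)
        _ = A^n * ((2*Φ^3)^k * (2*Φ^3)^n) := by ring_nf
        _ = A^n * 2^(k+n) * Φ^k' := by
            rw [← pow_add, mul_pow, ← pow_mul]
            have h9 : 3 * (k+n) = k' := by rw [hk']; ring
            rw [h9, mul_assoc]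
    have hnS : (0:ℝ) ≤ (n ! : ℝ) * S := mul_nonneg (Nat.cast_nonneg _) hS0
    calc ‖p‖^k * ‖iteratedFDeriv ℝ n (fun p => u (phi p)) p‖
        ≤ (1 + ‖p‖)^k * ((n ! : ℝ) * (S/Φ^k') * D^n) := by
          apply mul_le_mul (pow_le_pow_left₀ (norm_nonneg p) (by linarith [norm_nonneg p]) k)
            hcomp (norm_nonneg _)
          apply pow_nonneg
          linarith [norm_nonneg p]
      _ = (n ! : ℝ) * S * ((1 + ‖p‖)^k * D^n) * (Φ^k')⁻¹ := by
          rw [div_eq_mul_inv]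
          ring
      _ ≤ (n ! : ℝ) * S * (A^n * 2^(k+n) * Φ^k') * (Φ^k')⁻¹ := by
          apply mul_le_mul_of_nonneg_right (mul_le_mul_of_nonneg_left key hnS)
            (inv_nonneg.mpr hΦpos.le)
      _ = (n ! : ℝ) * S * (A^n * 2^(k+n)) * ((Φ^k') * (Φ^k')⁻¹) := by ring
      _ = (n ! : ℝ) * S * (A^n * 2^(k+n)) := by
          rw [mul_inv_cancel₀ hΦpos.ne', mul_one]
  · intro p
    show u (phi p) = u (p.1 / Real.cosh (p.2 / 2), Real.sinh p.2)
    have h : p.1 / Real.cosh (p.2/2) = p.1 * sch p.2 := by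
      rw [div_eq_mul_inv]; rfl
    rw [h]
    rfl
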